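/- For every p with 1 ≤ p < 2 there are constants c_0, c_1 > 0 such that for all integers n, M, N with 4 < n ≤ c_0·min(M,N), every randomized algorithm using n function values for computing the mean S_N on B_∞^N(L_p^M) (with outputs in L_p^M, error measured in the L_p^M norm) has worst-case expected error at least c_1 · n^{−1+1/p} · (log n)^{1−2/p} (logarithm to base 2). -/

import Mathlib

/-- The normalized `L_p^M` norm on `ℝ^M`: `‖x‖ = ((1/M) ∑ i, |x i|^p)^(1/p)`. -/
noncomputable def lpNorm (p : ℝ) (M : ℕ) (x : Fin M → ℝ) : ℝ :=
  ((M : ℝ)⁻¹ * ∑ i, |x i| ^ p) ^ (1 / p)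

private lemma nat_div_eq_iff {K c j : ℕ} (hK : 0 < K) :
    j / K = c ↔ K * c ≤ j ∧ j < K * c + K := by
  have h1 := Nat.div_add_mod j K
  have h2 := Nat.mod_lt j hK
  constructor
  · rintro rfl; omega
  · rintro ⟨ha, hb⟩
    refine Nat.div_eq_of_lt_le ?_ ?_
    · rwa [Nat.mul_comm]
    · rwa [Nat.succ_mul, Nat.mul_comm]

private lemma count_sum {N K c : ℕ} (hK : 0 < K) (h : K * c + K ≤ N) (A : ℝ) :
    ∑ j : Fin N, (if (j : ℕ) / K = c then A else 0) = (K : ℝ) * A := by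
  classical
  rw [Fin.sum_univ_eq_sum_range (fun j => if j / K = c then A else 0) N]
  rw [← Finset.sum_filter]
  have heq : (Finset.range N).filter (fun j => j / K = c)
      = Finset.Ico (K * c) (K * c + K) := by
    ext a
    simp only [Finset.mem_filter, Finset.mem_range, Finset.mem_Ico, nat_div_eq_iff hK]
    omega
  rw [heq, Finset.sum_const, Nat.card_Ico, Nat.add_sub_cancel_left, nsmul_eq_mul]

/-- The hard input family. -/
noncomputable def hardF (p : ℝ) (M N m K : ℕ) (σ : Fin M → Bool) (j : Fin N) :
    Fin M → ℝ :=
  fun i => if ((j : ℕ) / K = (i : ℕ) ∧ (i : ℕ) < m ∧ σ i = true) then (M : ℝ) ^ (1/p) else 0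

private lemma hardF_ball (p : ℝ) (hp : 1 ≤ p) (M N m K : ℕ) (hM : 0 < M)
    (σ : Fin M → Bool) (j : Fin N) : lpNorm p M (hardF p M N m K σ j) ≤ 1 := by
  classical
  have hp0 : (0:ℝ) < p := by linarith
  have hM0 : (0:ℝ) < (M:ℝ) := by exact_mod_cast hM
  have hA : (0:ℝ) ≤ (M:ℝ) ^ (1/p) := (Real.rpow_pos_of_pos hM0 _).le
  have hAp : ((M:ℝ) ^ (1/p)) ^ p = (M:ℝ) := by
    rw [← Real.rpow_mul (le_of_lt hM0), one_div_mul_cancel (ne_of_gt hp0), Real.rpow_one]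
  unfold lpNorm hardF
  have key : ∑ i : Fin M,
      |if ((j : ℕ) / K = (i : ℕ) ∧ (i : ℕ) < m ∧ σ i = true) then (M : ℝ) ^ (1/p) else 0| ^ p
      ≤ (M : ℝ) := by
    have le1 : ∀ i : Fin M,
        |if ((j : ℕ) / K = (i : ℕ) ∧ (i : ℕ) < m ∧ σ i = true) then (M : ℝ) ^ (1/p) else 0| ^ p
        ≤ (if (i : ℕ) = (j : ℕ) / K then (M : ℝ) else 0) := by
      intro i
      by_cases h : ((j : ℕ) / K = (i : ℕ) ∧ (i : ℕ) < m ∧ σ i = true)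
      · rw [if_pos h, if_pos h.1.symm, abs_of_nonneg hA, hAp]
      · rw [if_neg h, abs_zero, Real.zero_rpow (ne_of_gt hp0)]
        split_ifs
        · exact le_of_lt hM0
        · exact le_refl 0
    calc ∑ i : Fin M,
        |if ((j : ℕ) / K = (i : ℕ) ∧ (i : ℕ) < m ∧ σ i = true) then (M : ℝ) ^ (1/p) else 0| ^ p
        ≤ ∑ i : Fin M, (if (i : ℕ) = (j : ℕ) / K then (M : ℝ) else 0) :=
          Finset.sum_le_sum (fun i _ => le1 i)
      _ ≤ (M : ℝ) := by
          rw [← Finset.sum_filter]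
          have hcard : (Finset.univ.filter (fun i : Fin M => (i : ℕ) = (j : ℕ) / K)).card ≤ 1 := by
            refine Finset.card_le_one.mpr ?_
            intro a ha b hb
            simp only [Finset.mem_filter] at ha hb
            exact Fin.ext (ha.2.trans hb.2.symm)
          rw [Finset.sum_const, nsmul_eq_mul]
          calc ((Finset.univ.filter (fun i : Fin M => (i : ℕ) = (j : ℕ) / K)).card : ℝ) * (M:ℝ)
              ≤ 1 * (M:ℝ) := by
                apply mul_le_mul_of_nonneg_right _ (le_of_lt hM0)
                exact_mod_cast hcard
            _ = (M:ℝ) := one_mul _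
  have hnn : (0:ℝ) ≤ ∑ i : Fin M,
      |if ((j : ℕ) / K = (i : ℕ) ∧ (i : ℕ) < m ∧ σ i = true) then (M : ℝ) ^ (1/p) else 0| ^ p :=
    Finset.sum_nonneg (fun i _ => Real.rpow_nonneg (abs_nonneg _) _)
  have h1 : (M:ℝ)⁻¹ * ∑ i : Fin M,
      |if ((j : ℕ) / K = (i : ℕ) ∧ (i : ℕ) < m ∧ σ i = true) then (M : ℝ) ^ (1/p) else 0| ^ p ≤ 1 := by
    calc (M:ℝ)⁻¹ * ∑ i : Fin M,
        |if ((j : ℕ) / K = (i : ℕ) ∧ (i : ℕ) < m ∧ σ i = true) then (M : ℝ) ^ (1/p) else 0| ^ p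
        ≤ (M:ℝ)⁻¹ * (M:ℝ) := mul_le_mul_of_nonneg_left key (inv_nonneg.mpr (le_of_lt hM0))
      _ = 1 := inv_mul_cancel₀ (ne_of_gt hM0)
  calc ((M:ℝ)⁻¹ * ∑ i : Fin M,
      |if ((j : ℕ) / K = (i : ℕ) ∧ (i : ℕ) < m ∧ σ i = true) then (M : ℝ) ^ (1/p) else 0| ^ p) ^ (1/p)
      ≤ (1:ℝ) ^ (1/p) :=
        Real.rpow_le_rpow (mul_nonneg (inv_nonneg.mpr (le_of_lt hM0)) hnn) h1 (by positivity)
    _ = 1 := Real.one_rpow _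

private lemma hardF_apply_sum (p : ℝ) (M N m K : ℕ) (hK : 0 < K) (hmK : m * K ≤ N)
    (σ : Fin M → Bool) (i : Fin M) :
    (∑ j : Fin N, hardF p M N m K σ j) i
      = if ((i : ℕ) < m ∧ σ i = true) then (K : ℝ) * (M : ℝ) ^ (1/p) else 0 := by
  classical
  rw [Finset.sum_apply]
  unfold hardF
  by_cases h : ((i : ℕ) < m ∧ σ i = true)
  · rw [if_pos h]
    have hcg : ∀ j : Fin N,
        (if ((j : ℕ) / K = (i : ℕ) ∧ (i : ℕ) < m ∧ σ i = true) then (M : ℝ) ^ (1/p) else 0)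
        = (if (j : ℕ) / K = (i : ℕ) then (M : ℝ) ^ (1/p) else 0) := by
      intro j
      by_cases hj : (j : ℕ) / K = (i : ℕ)
      · rw [if_pos ⟨hj, h⟩, if_pos hj]
      · rw [if_neg (fun hc => hj hc.1), if_neg hj]
    rw [Finset.sum_congr rfl (fun j _ => hcg j)]
    refine count_sum hK ?_ _
    calc K * (i : ℕ) + K = K * ((i : ℕ) + 1) := by ring
      _ ≤ K * m := Nat.mul_le_mul le_rfl (by omega)
      _ = m * K := Nat.mul_comm _ _
      _ ≤ N := hmK
  · rw [if_neg h]
    refine Finset.sum_eq_zero (fun j _ => ?_)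
    rw [if_neg (fun hc => h ⟨hc.2.1, hc.2.2⟩)]

private lemma rpow_lb {p x C : ℝ} (hp : 1 ≤ p) (hx : 0 ≤ x) (hC : 0 < C) (hxC : x ≤ C) :
    x * C ^ (1/p - 1) ≤ x ^ (1/p : ℝ) := by
  have hp0 : (0:ℝ) < p := by linarith
  rcases eq_or_lt_of_le hx with h | h
  · rw [← h, zero_mul, Real.zero_rpow (one_div_ne_zero (ne_of_gt hp0))]
  · have hexp : 1/p - 1 ≤ 0 := by
      have h1 : 1/p ≤ 1 := by rw [div_le_one hp0]; linarith
      linarith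
    have h1 : C ^ (1/p - 1) ≤ x ^ (1/p - 1) := Real.rpow_le_rpow_of_nonpos h hxC hexp
    calc x * C ^ (1/p - 1) ≤ x * x ^ (1/p - 1) := mul_le_mul_of_nonneg_left h1 hx
      _ = x ^ (1:ℝ) * x ^ (1/p - 1) := by rw [Real.rpow_one]
      _ = x ^ (1 + (1/p - 1)) := (Real.rpow_add h _ _).symm
      _ = x ^ (1/p : ℝ) := by norm_num

private lemma pair_core {p D c : ℝ} (hp : 1 ≤ p) (hD : 0 < D) :
    (D/2)^p ≤ (min |D - c| D) ^ p + (min |0 - c| D) ^ p := by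
  have hp0 : (0:ℝ) ≤ p := by linarith
  have hD2 : (0:ℝ) ≤ D/2 := by linarith
  have hmin1 : (0:ℝ) ≤ min |D - c| D := le_min (abs_nonneg _) hD.le
  have hmin2 : (0:ℝ) ≤ min |0 - c| D := le_min (abs_nonneg _) hD.le
  rcases le_or_gt (D/2) |D - c| with h | h
  · have h1 : D/2 ≤ min |D - c| D := le_min h (by linarith)
    have h4 := Real.rpow_le_rpow hD2 h1 hp0
    have h2 : (0:ℝ) ≤ (min |0 - c| D) ^ p := Real.rpow_nonneg hmin2 _
    linarith
  · have habs : D/2 ≤ |0 - c| := by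
      have h3 : |D| - |c| ≤ |D - c| := abs_sub_abs_le_abs_sub D c
      rw [abs_of_pos hD] at h3
      have h5 : |0 - c| = |c| := by rw [zero_sub, abs_neg]
      rw [h5]
      linarith
    have h1 : D/2 ≤ min |0 - c| D := le_min habs (by linarith)
    have h4 := Real.rpow_le_rpow hD2 h1 hp0
    have h2 : (0:ℝ) ≤ (min |D - c| D) ^ p := Real.rpow_nonneg hmin1 _
    linarith

private lemma hidden_card {M n m : ℕ} (hmM : m ≤ M) (g : Fin n → ℕ)
    (Q : Fin M → Prop) [DecidablePred Q]
    (hQ : ∀ i : Fin M, (i : ℕ) < m → (∀ l, g l ≠ (i : ℕ)) → Q i) :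
    m ≤ n + (Finset.univ.filter Q).card := by
  classical
  set T' : Finset ℕ := Finset.univ.image g with hT
  have hT'card : T'.card ≤ n := by
    calc T'.card ≤ (Finset.univ : Finset (Fin n)).card := Finset.card_image_le
      _ = n := by simp
  set S1 : Finset (Fin M) := Finset.univ.filter (fun i => (i : ℕ) < m) with hS1
  have hS1card : S1.card = m := by
    have h : S1.card = (Finset.range m).card := by
      refine Finset.card_bij (fun a _ => (a : ℕ)) ?_ ?_ ?_
      · intro a ha
        simp only [hS1, Finset.mem_filter, Finset.mem_univ, true_and] at ha
        exact Finset.mem_range.mpr ha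
      · intro a _ b _ hab
        exact Fin.ext hab
      · intro c hc
        refine ⟨⟨c, lt_of_lt_of_le (Finset.mem_range.mp hc) hmM⟩, ?_, rfl⟩
        simp [hS1, Finset.mem_range.mp hc]
    rw [h, Finset.card_range]
  have hsub : S1 ⊆ (Finset.univ.filter Q) ∪ (Finset.univ.filter (fun i : Fin M => (i:ℕ) ∈ T')) := by
    intro i hi
    simp only [hS1, Finset.mem_filter, Finset.mem_univ, true_and] at hi
    by_cases h : ∀ l, g l ≠ (i : ℕ)
    · exact Finset.mem_union_left _ (Finset.mem_filter.mpr ⟨Finset.mem_univ _, hQ i hi h⟩)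
    · push_neg at h
      obtain ⟨l, hl⟩ := h
      refine Finset.mem_union_right _ (Finset.mem_filter.mpr ⟨Finset.mem_univ _, ?_⟩)
      rw [hT]
      exact Finset.mem_image.mpr ⟨l, Finset.mem_univ _, hl⟩
  have h2 : (Finset.univ.filter (fun i : Fin M => (i:ℕ) ∈ T')).card ≤ T'.card := by
    refine Finset.card_le_card_of_injOn (fun i => (i : ℕ)) ?_ ?_
    · intro a ha
      simp only [Finset.mem_coe, Finset.mem_filter, Finset.mem_univ, true_and] at ha
      exact Finset.mem_coe.mpr ha
    · intro a _ b _ hab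
      exact Fin.ext hab
  have h3 := Finset.card_le_card hsub
  have h4 := Finset.card_union_le (Finset.univ.filter Q)
    (Finset.univ.filter (fun i : Fin M => (i:ℕ) ∈ T'))
  omega


/-- For every `1 ≤ p < 2` there are constants `c₀, c₁ > 0` such
that for all `n, M, N` with `4 < n ≤ c₀·min(M,N)`, every randomized algorithm using
`n` function values for computing the mean `S_N` on `B_∞^N(L_p^M)` has worst-case
expected error at least `c₁ · n^(−1+1/p) · (log₂ n)^(1−2/p)`: any upper bound `b`
for the expected errors over the unit ball is at least that much. -/
theorem mean_lp_lower_low_log (p : ℝ) (hp1 : 1 ≤ p) (hp2 : p < 2) :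
    ∃ c₀ c₁ : ℝ, 0 < c₀ ∧ 0 < c₁ ∧
      ∀ (n M N : ℕ), 4 < n → (n : ℝ) ≤ c₀ * min (M : ℝ) (N : ℝ) →
        ∀ (Ω : Type) [Fintype Ω] (P : Ω → ℝ),
          (∀ ω, 0 ≤ P ω) → (∑ ω, P ω = 1) →
          ∀ (t : Ω → Fin n → Fin N)
            (φ : Ω → (Fin n → (Fin M → ℝ)) → (Fin M → ℝ)) (b : ℝ),
            (∀ f : Fin N → Fin M → ℝ, (∀ j, lpNorm p M (f j) ≤ 1) →
              ∑ ω, P ω *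
                  lpNorm p M
                    ((N : ℝ)⁻¹ • ∑ j, f j - φ ω (fun l => f (t ω l))) ≤ b) →
            c₁ * (n : ℝ) ^ (-1 + 1 / p) * Real.logb 2 n ^ (1 - 2 / p) ≤ b := by
  classical
  refine ⟨1/4, 1/32, by norm_num, by norm_num, ?_⟩
  intro n M N hn4 hmin Ω _ P hP0 hP1 t φ b hb
  have hp0 : (0:ℝ) < p := by linarith
  have hpne : p ≠ 0 := ne_of_gt hp0
  have hminM := min_le_left (M:ℝ) (N:ℝ)
  have hminN := min_le_right (M:ℝ) (N:ℝ)
  have hnr0 : (0:ℝ) < (n:ℝ) := by exact_mod_cast (by omega : 0 < n)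
  have hMr : 4 * (n:ℝ) ≤ (M:ℝ) := by linarith
  have hNr : 4 * (n:ℝ) ≤ (N:ℝ) := by linarith
  have hM4 : 4 * n ≤ M := by exact_mod_cast (by push_cast; linarith : ((4*n : ℕ):ℝ) ≤ (M:ℝ))
  have hN4 : 4 * n ≤ N := by exact_mod_cast (by push_cast; linarith : ((4*n : ℕ):ℝ) ≤ (N:ℝ))
  set m := 2 * n with hm
  have hm0 : 0 < m := by omega
  have hmM : m ≤ M := by omega
  set K := N / m with hKdef
  have hKpos : 0 < K := Nat.div_pos (by omega) hm0
  have hmK : m * K ≤ N := by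
    calc m * K = K * m := Nat.mul_comm _ _
      _ ≤ N := Nat.div_mul_le_self N m
  have hNn : 0 < N := by omega
  have hMn : 0 < M := by omega
  have hMr0 : (0:ℝ) < (M:ℝ) := by exact_mod_cast hMn
  have hNr0 : (0:ℝ) < (N:ℝ) := by exact_mod_cast hNn
  have hKr0 : (0:ℝ) < (K:ℝ) := by exact_mod_cast hKpos
  have hNK' : N ≤ 2 * (m * K) := by
    have h1 : m * K + N % m = N := Nat.div_add_mod N m
    have h2 : N % m < m := Nat.mod_lt N hm0
    have h4 : 2 * m ≤ N := by omega
    generalize m * K = MK at h1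
    omega
  have hNK : (N:ℝ) ≤ 4 * (n:ℝ) * (K:ℝ) := by
    have h := hNK'
    rw [hm] at h
    calc (N:ℝ) ≤ ((2 * (2 * n * K) : ℕ) : ℝ) := by exact_mod_cast h
      _ = 4 * (n:ℝ) * (K:ℝ) := by push_cast; ring
  set A := (M:ℝ) ^ (1/p) with hA
  have hApos : 0 < A := Real.rpow_pos_of_pos hMr0 _
  set D := (N:ℝ)⁻¹ * ((K:ℝ) * A) with hD
  have hDpos : 0 < D := by
    rw [hD]; exact mul_pos (inv_pos.mpr hNr0) (mul_pos hKr0 hApos)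
  have hDA : A / (4 * (n:ℝ)) ≤ D := by
    rw [hD, show (N:ℝ)⁻¹ * ((K:ℝ) * A) = (K:ℝ) * A / (N:ℝ) from by ring]
    rw [div_le_div_iff₀ (by linarith) hNr0]
    nlinarith [mul_le_mul_of_nonneg_left hNK hApos.le]
  have hball : ∀ σ : Fin M → Bool, ∀ j, lpNorm p M (hardF p M N m K σ j) ≤ 1 :=
    fun σ j => hardF_ball p hp1 M N m K hMn σ j
  have hbs : ∀ σ : Fin M → Bool,
      ∑ ω, P ω * lpNorm p M ((N:ℝ)⁻¹ • ∑ j, hardF p M N m K σ j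
        - φ ω fun l => hardF p M N m K σ (t ω l)) ≤ b :=
    fun σ => hb _ (hball σ)
  set κ := (Fintype.card (Fin M → Bool) : ℝ) with hκ
  have hκpos : 0 < κ := by
    rw [hκ]; exact_mod_cast Fintype.card_pos
  set c' := (1/32 : ℝ) * (n:ℝ) ^ (1/p - 1 : ℝ) with hc'
  -- main per-ω bound
  have key : ∀ ω : Ω, κ * c' ≤ ∑ σ : Fin M → Bool,
      lpNorm p M ((N:ℝ)⁻¹ • ∑ j, hardF p M N m K σ j
        - φ ω fun l => hardF p M N m K σ (t ω l)) := by
    intro ω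
    let y : (Fin M → Bool) → Fin M → ℝ := fun σ => φ ω (fun l => hardF p M N m K σ (t ω l))
    let v : (Fin M → Bool) → Fin M → ℝ :=
      fun σ => (N:ℝ)⁻¹ • ∑ j, hardF p M N m K σ j - y σ
    let u : (Fin M → Bool) → Fin M → ℝ := fun σ i => (min |v σ i| D) ^ p
    have hgoal : (∑ σ : Fin M → Bool,
        lpNorm p M ((N:ℝ)⁻¹ • ∑ j, hardF p M N m K σ j
          - φ ω fun l => hardF p M N m K σ (t ω l)))
        = ∑ σ : Fin M → Bool, lpNorm p M (v σ) := rfl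
    rw [hgoal]
    set Hd : Finset (Fin M) := Finset.univ.filter
      (fun i : Fin M => (i:ℕ) < m ∧ ∀ l, ((t ω l : ℕ)) / K ≠ (i:ℕ)) with hHd
    have hHdn : n ≤ Hd.card := by
      have h := hidden_card hmM (fun l => ((t ω l : ℕ)) / K)
        (fun i : Fin M => (i:ℕ) < m ∧ ∀ l, ((t ω l : ℕ)) / K ≠ (i:ℕ))
        (fun i hi hl => ⟨hi, hl⟩)
      rw [← hHd] at h
      omega
    have hHdcard : (n:ℝ) ≤ (Hd.card : ℝ) := by exact_mod_cast hHdn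
    -- pairing bound
    have hpair : ∀ i ∈ Hd, κ * (D/2)^p ≤ 2 * ∑ σ : Fin M → Bool, u σ i := by
      intro i hi
      have hmem := Finset.mem_filter.mp hi
      have him : (i:ℕ) < m := hmem.2.1
      have hhid : ∀ l, ((t ω l : ℕ)) / K ≠ (i:ℕ) := hmem.2.2
      have hval : ∀ σ : Fin M → Bool, v σ i = (if σ i = true then D else 0) - y σ i := by
        intro σ
        have hrfl : v σ i = (N:ℝ)⁻¹ * ((∑ j, hardF p M N m K σ j) i) - y σ i := rfl
        rw [hrfl, hardF_apply_sum p M N m K hKpos hmK σ i]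
        by_cases hσ : σ i = true
        · rw [if_pos ⟨him, hσ⟩, if_pos hσ, hD, hA]
        · rw [if_neg (fun hc => hσ hc.2), if_neg hσ, mul_zero]
      have hflipinv : Function.Involutive
          (fun σ : Fin M → Bool => Function.update σ i (!σ i)) := by
        intro σ
        simp [Function.update_idem, Function.update_self, Bool.not_not,
          Function.update_eq_self]
      have hyflip : ∀ σ : Fin M → Bool, y (Function.update σ i (!σ i)) = y σ := by
        intro σ
        show φ ω (fun l => hardF p M N m K (Function.update σ i (!σ i)) (t ω l))
          = φ ω (fun l => hardF p M N m K σ (t ω l))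
        refine congrArg (φ ω) (funext fun l => funext fun i' => ?_)
        show (if ((t ω l : ℕ) / K = (i' : ℕ) ∧ (i' : ℕ) < m ∧
            (Function.update σ i (!σ i)) i' = true) then (M : ℝ) ^ (1/p) else 0)
          = (if ((t ω l : ℕ) / K = (i' : ℕ) ∧ (i' : ℕ) < m ∧ σ i' = true)
              then (M : ℝ) ^ (1/p) else 0)
        by_cases hi' : i' = i
        · subst hi'
          rw [if_neg (fun hc => hhid l hc.1), if_neg (fun hc => hhid l hc.1)]
        · rw [Function.update_of_ne hi']
      have hkey : ∀ σ : Fin M → Bool,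
          (D/2)^p ≤ u σ i + u (Function.update σ i (!σ i)) i := by
        intro σ
        have h1 := hval σ
        have h2 := hval (Function.update σ i (!σ i))
        rw [hyflip σ, Function.update_self] at h2
        show (D/2)^p ≤ (min |v σ i| D) ^ p + (min |v (Function.update σ i (!σ i)) i| D) ^ p
        by_cases hσ : σ i = true
        · rw [if_pos hσ] at h1
          rw [if_neg (show ¬((!σ i) = true) from by simp [hσ])] at h2
          rw [h1, h2]
          exact pair_core hp1 hDpos
        · have hσ' : σ i = false := by
            cases hx : σ i
            · rfl
            · exact absurd hx hσ
          rw [if_neg hσ] at h1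
          rw [if_pos (show (!σ i) = true from by rw [hσ']; rfl)] at h2
          rw [h1, h2, add_comm]
          exact pair_core hp1 hDpos
      have hsumflip : ∑ σ : Fin M → Bool, u (Function.update σ i (!σ i)) i
          = ∑ σ : Fin M → Bool, u σ i :=
        Fintype.sum_bijective (fun σ : Fin M → Bool => Function.update σ i (!σ i))
          hflipinv.bijective _ _ (fun σ => rfl)
      calc κ * (D/2)^p = ∑ _σ : Fin M → Bool, (D/2)^p := by
            rw [Finset.sum_const, Finset.card_univ, nsmul_eq_mul, hκ]
        _ ≤ ∑ σ : Fin M → Bool, (u σ i + u (Function.update σ i (!σ i)) i) :=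
            Finset.sum_le_sum (fun σ _ => hkey σ)
        _ = (∑ σ : Fin M → Bool, u σ i) + ∑ σ : Fin M → Bool, u (Function.update σ i (!σ i)) i :=
            Finset.sum_add_distrib
        _ = 2 * ∑ σ : Fin M → Bool, u σ i := by rw [hsumflip]; ring
    -- truncation bound and sum
    have humin : ∀ σ (i : Fin M), (0:ℝ) ≤ min |v σ i| D := fun σ i =>
      le_min (abs_nonneg _) hDpos.le
    have hCpos : 0 < (M:ℝ)⁻¹ * (Hd.card : ℝ) * D ^ p := by
      have hcard0 : (0:ℝ) < (Hd.card : ℝ) := lt_of_lt_of_le hnr0 hHdcard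
      exact mul_pos (mul_pos (inv_pos.mpr hMr0) hcard0) (Real.rpow_pos_of_pos hDpos p)
    set C := (M:ℝ)⁻¹ * (Hd.card : ℝ) * D ^ p with hC
    have hgC : ∀ σ : Fin M → Bool, (M:ℝ)⁻¹ * ∑ i ∈ Hd, u σ i ≤ C := by
      intro σ
      have hle : ∑ i ∈ Hd, u σ i ≤ ∑ _i ∈ Hd, D ^ p := by
        refine Finset.sum_le_sum (fun i _ => ?_)
        exact Real.rpow_le_rpow (humin σ i) (min_le_right _ _) (by linarith)
      rw [Finset.sum_const, nsmul_eq_mul] at hle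
      calc (M:ℝ)⁻¹ * ∑ i ∈ Hd, u σ i ≤ (M:ℝ)⁻¹ * ((Hd.card:ℝ) * D^p) :=
            mul_le_mul_of_nonneg_left hle (inv_nonneg.mpr hMr0.le)
        _ = C := by rw [hC]; ring
    have hg0 : ∀ σ : Fin M → Bool, (0:ℝ) ≤ (M:ℝ)⁻¹ * ∑ i ∈ Hd, u σ i := by
      intro σ
      exact mul_nonneg (inv_nonneg.mpr hMr0.le)
        (Finset.sum_nonneg fun i _ => Real.rpow_nonneg (humin σ i) _)
    have hstep : ∀ σ : Fin M → Bool,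
        ((M:ℝ)⁻¹ * ∑ i ∈ Hd, u σ i) * C ^ (1/p - 1) ≤ lpNorm p M (v σ) := by
      intro σ
      calc ((M:ℝ)⁻¹ * ∑ i ∈ Hd, u σ i) * C ^ (1/p - 1)
          ≤ ((M:ℝ)⁻¹ * ∑ i ∈ Hd, u σ i) ^ (1/p : ℝ) :=
            rpow_lb hp1 (hg0 σ) hCpos (hgC σ)
        _ ≤ lpNorm p M (v σ) := by
            unfold lpNorm
            refine Real.rpow_le_rpow (hg0 σ) ?_ (by positivity)
            refine mul_le_mul_of_nonneg_left ?_ (inv_nonneg.mpr hMr0.le)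
            calc ∑ i ∈ Hd, u σ i ≤ ∑ i ∈ Hd, |v σ i| ^ p :=
                  Finset.sum_le_sum (fun i _ =>
                    Real.rpow_le_rpow (humin σ i) (min_le_left _ _) (by linarith))
              _ ≤ ∑ i, |v σ i| ^ p :=
                  Finset.sum_le_sum_of_subset_of_nonneg (Finset.subset_univ _)
                    (fun i _ _ => Real.rpow_nonneg (abs_nonneg _) _)
    -- summing
    have h3 : (Hd.card : ℝ) * (κ * (D/2)^p / 2) ≤ ∑ i ∈ Hd, ∑ σ : Fin M → Bool, u σ i := by
      calc (Hd.card:ℝ) * (κ * (D/2)^p / 2) = ∑ _i ∈ Hd, κ * (D/2)^p / 2 := by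
            rw [Finset.sum_const, nsmul_eq_mul]
        _ ≤ ∑ i ∈ Hd, ∑ σ : Fin M → Bool, u σ i :=
            Finset.sum_le_sum (fun i hi => by linarith [hpair i hi])
    have hsum1 : C ^ (1/p - 1) * ((M:ℝ)⁻¹ * ((Hd.card:ℝ) * (κ * (D/2)^p / 2)))
        ≤ ∑ σ : Fin M → Bool, lpNorm p M (v σ) := by
      have h1 : ∑ σ : Fin M → Bool, ((M:ℝ)⁻¹ * ∑ i ∈ Hd, u σ i) * C ^ (1/p - 1)
          ≤ ∑ σ : Fin M → Bool, lpNorm p M (v σ) := Finset.sum_le_sum fun σ _ => hstep σ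
      refine le_trans ?_ h1
      have h2 : ∑ σ : Fin M → Bool, ((M:ℝ)⁻¹ * ∑ i ∈ Hd, u σ i) * C ^ (1/p - 1)
          = ((M:ℝ)⁻¹ * ∑ i ∈ Hd, ∑ σ : Fin M → Bool, u σ i) * C ^ (1/p - 1) := by
        rw [← Finset.sum_mul, ← Finset.mul_sum, Finset.sum_comm]
      rw [h2]
      calc C ^ (1/p - 1) * ((M:ℝ)⁻¹ * ((Hd.card:ℝ) * (κ * (D/2)^p / 2)))
          ≤ C ^ (1/p - 1) * ((M:ℝ)⁻¹ * (∑ i ∈ Hd, ∑ σ : Fin M → Bool, u σ i)) := by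
            refine mul_le_mul_of_nonneg_left ?_ (Real.rpow_nonneg hCpos.le _)
            exact mul_le_mul_of_nonneg_left h3 (inv_nonneg.mpr hMr0.le)
        _ = ((M:ℝ)⁻¹ * ∑ i ∈ Hd, ∑ σ : Fin M → Bool, u σ i) * C ^ (1/p - 1) := by ring
    -- numeric bound
    have h2p : (2:ℝ) ^ (p : ℝ) ≤ 4 := by
      have h22 : (2:ℝ) ^ (2:ℝ) = 4 := by
        rw [show (2:ℝ) = ((1:ℝ) + 1) from by norm_num]
        rw [Real.rpow_add (by norm_num), Real.rpow_one]
        norm_num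
      calc (2:ℝ) ^ (p:ℝ) ≤ (2:ℝ) ^ (2:ℝ) :=
            Real.rpow_le_rpow_of_exponent_le one_le_two hp2.le
        _ = 4 := h22
    have h2ppos : (0:ℝ) < (2:ℝ) ^ (p:ℝ) := Real.rpow_pos_of_pos two_pos _
    have hC1 : (M:ℝ)⁻¹ * (n:ℝ) * D ^ p ≤ C := by
      rw [hC]
      exact mul_le_mul_of_nonneg_right
        (mul_le_mul_of_nonneg_left hHdcard (inv_nonneg.mpr hMr0.le))
        (Real.rpow_nonneg hDpos.le p)
    have hC2 : ((M:ℝ)⁻¹ * (n:ℝ) * D^p) ^ (1/p : ℝ) ≤ C ^ (1/p : ℝ) :=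
      Real.rpow_le_rpow (by positivity) hC1 (by positivity)
    have hC3 : ((M:ℝ)⁻¹ * (n:ℝ) * D^p) ^ (1/p : ℝ) = ((M:ℝ)⁻¹ * (n:ℝ)) ^ (1/p : ℝ) * D := by
      rw [Real.mul_rpow (by positivity) (Real.rpow_nonneg hDpos.le p)]
      congr 1
      rw [← Real.rpow_mul hDpos.le, mul_one_div, div_self hpne, Real.rpow_one]
    have hC4 : ((M:ℝ)⁻¹ * (n:ℝ)) ^ (1/p : ℝ) * A = (n:ℝ) ^ (1/p : ℝ) := by
      rw [hA, ← Real.mul_rpow (by positivity) hMr0.le]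
      congr 1
      field_simp
    have hC5 : (n:ℝ) ^ (1/p : ℝ) / (4*(n:ℝ)) ≤ ((M:ℝ)⁻¹ * (n:ℝ)) ^ (1/p : ℝ) * D := by
      calc (n:ℝ) ^ (1/p : ℝ) / (4*(n:ℝ))
          = ((M:ℝ)⁻¹ * (n:ℝ)) ^ (1/p : ℝ) * (A/(4*(n:ℝ))) := by rw [← hC4]; ring
        _ ≤ ((M:ℝ)⁻¹ * (n:ℝ)) ^ (1/p : ℝ) * D :=
            mul_le_mul_of_nonneg_left hDA (Real.rpow_nonneg (by positivity) _)
    have hC6 : (n:ℝ) ^ (1/p : ℝ) / (4*(n:ℝ)) = (n:ℝ) ^ (1/p - 1 : ℝ) / 4 := by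
      rw [Real.rpow_sub hnr0, Real.rpow_one]; ring
    have hCfin : (n:ℝ) ^ (1/p - 1 : ℝ) / 4 ≤ C ^ (1/p : ℝ) := by
      calc (n:ℝ) ^ (1/p - 1 : ℝ) / 4 = (n:ℝ) ^ (1/p : ℝ) / (4*(n:ℝ)) := hC6.symm
        _ ≤ ((M:ℝ)⁻¹ * (n:ℝ)) ^ (1/p : ℝ) * D := hC5
        _ = ((M:ℝ)⁻¹ * (n:ℝ) * D^p) ^ (1/p : ℝ) := hC3.symm
        _ ≤ C ^ (1/p : ℝ) := hC2
    have hRHS : C ^ (1/p - 1) * ((M:ℝ)⁻¹ * ((Hd.card:ℝ) * (κ * (D/2)^p / 2)))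
        = κ * (C ^ (1/p : ℝ) / (2 * (2:ℝ)^(p:ℝ))) := by
      rw [Real.div_rpow hDpos.le (by norm_num : (0:ℝ) ≤ 2)]
      have hCsplit : C ^ (1/p - 1 : ℝ) * C = C ^ (1/p : ℝ) := by
        calc C ^ (1/p - 1 : ℝ) * C = C ^ (1/p - 1 : ℝ) * C ^ (1:ℝ) := by rw [Real.rpow_one]
          _ = C ^ ((1/p - 1) + 1 : ℝ) := (Real.rpow_add hCpos _ _).symm
          _ = C ^ (1/p : ℝ) := by norm_num
      calc C ^ (1/p - 1) * ((M:ℝ)⁻¹ * ((Hd.card:ℝ) * (κ * (D^p/(2:ℝ)^(p:ℝ)) / 2)))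
          = κ * ((C ^ (1/p - 1 : ℝ) * ((M:ℝ)⁻¹ * (Hd.card:ℝ) * D^p)) / (2 * (2:ℝ)^(p:ℝ))) := by
            field_simp
        _ = κ * (C ^ (1/p : ℝ) / (2 * (2:ℝ)^(p:ℝ))) := by rw [← hC, hCsplit]
    have hfin : c' ≤ C ^ (1/p : ℝ) / (2 * (2:ℝ)^(p:ℝ)) := by
      rw [hc']
      calc (1/32:ℝ) * (n:ℝ) ^ (1/p - 1 : ℝ) = ((n:ℝ) ^ (1/p - 1 : ℝ) / 4) / 8 := by ring
        _ ≤ C ^ (1/p : ℝ) / (2 * (2:ℝ)^(p:ℝ)) :=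
            div_le_div₀ (Real.rpow_nonneg hCpos.le _) hCfin (by positivity) (by linarith)
    calc κ * c' ≤ κ * (C ^ (1/p : ℝ) / (2 * (2:ℝ)^(p:ℝ))) :=
          mul_le_mul_of_nonneg_left hfin hκpos.le
      _ = C ^ (1/p - 1) * ((M:ℝ)⁻¹ * ((Hd.card:ℝ) * (κ * (D/2)^p / 2))) := hRHS.symm
      _ ≤ ∑ σ : Fin M → Bool, lpNorm p M (v σ) := hsum1
  -- assemble
  have hcb : c' ≤ b := by
    have h1 : ∑ σ : Fin M → Bool, ∑ ω, P ω * lpNorm p M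
        ((N:ℝ)⁻¹ • ∑ j, hardF p M N m K σ j - φ ω fun l => hardF p M N m K σ (t ω l))
        ≤ κ * b := by
      calc ∑ σ : Fin M → Bool, ∑ ω, P ω * lpNorm p M
              ((N:ℝ)⁻¹ • ∑ j, hardF p M N m K σ j - φ ω fun l => hardF p M N m K σ (t ω l))
            ≤ ∑ _σ : Fin M → Bool, b := Finset.sum_le_sum (fun σ _ => hbs σ)
        _ = κ * b := by rw [Finset.sum_const, Finset.card_univ, nsmul_eq_mul, hκ]
    have h2 : κ * c' ≤ ∑ σ : Fin M → Bool, ∑ ω, P ω * lpNorm p M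
        ((N:ℝ)⁻¹ • ∑ j, hardF p M N m K σ j - φ ω fun l => hardF p M N m K σ (t ω l)) := by
      rw [Finset.sum_comm]
      have h3 : ∀ ω₀ : Ω, P ω₀ * (κ * c') ≤ ∑ σ : Fin M → Bool, P ω₀ * lpNorm p M
          ((N:ℝ)⁻¹ • ∑ j, hardF p M N m K σ j - φ ω₀ fun l => hardF p M N m K σ (t ω₀ l)) := by
        intro ω₀
        rw [← Finset.mul_sum]
        exact mul_le_mul_of_nonneg_left (key ω₀) (hP0 ω₀)
      calc κ * c' = ∑ ω, P ω * (κ * c') := by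
            rw [← Finset.sum_mul, hP1, one_mul]
        _ ≤ _ := Finset.sum_le_sum (fun ω₀ _ => h3 ω₀)
    exact le_of_mul_le_mul_left (le_trans h2 h1) hκpos
  have hlog1 : (1:ℝ) ≤ Real.logb 2 (n:ℝ) := by
    rw [← Real.logb_self_eq_one (show (1:ℝ) < 2 from by norm_num)]
    exact Real.logb_le_logb_of_le (by norm_num) (by norm_num)
      (by exact_mod_cast (by omega : 2 ≤ n))
  have hlogle : Real.logb 2 (n:ℝ) ^ (1 - 2/p : ℝ) ≤ 1 :=
    Real.rpow_le_one_of_one_le_of_nonpos hlog1 (by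
      have h : (1:ℝ) ≤ 2/p := by rw [le_div_iff₀ hp0]; linarith
      linarith)
  calc (1/32:ℝ) * (n:ℝ) ^ (-1 + 1/p : ℝ) * Real.logb 2 (n:ℝ) ^ (1 - 2/p : ℝ)
      ≤ (1/32:ℝ) * (n:ℝ) ^ (-1 + 1/p : ℝ) * 1 := by
        refine mul_le_mul_of_nonneg_left hlogle ?_
        positivity
    _ = c' := by
        rw [hc', mul_one, show (-1 + 1/p : ℝ) = 1/p - 1 from by ring]
    _ ≤ b := hcb
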